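/- For every positive semidefinite P ∈ ℝ^{d×d}: 𝓕(P) = S^{1/2} (I + S^{1/2} P S^{1/2})⁻¹ S^{1/2}, and in Loewner order α₋(P)·S ≤ 𝓕(P) ≤ α₊(P)·S, where α₋(P) := (1 + λ₁(P)λ₁(S))⁻¹ and α₊(P) := (1 + λ_d(P)λ_d(S))⁻¹. -/

import Mathlib

open Matrix

noncomputable section

open Classical in
/-- The positive semidefinite square root of a positive semidefinite matrix
(junk value `0` if the matrix is not positive semidefinite). -/
def msqrt {d : ℕ} (M : Matrix (Fin d) (Fin d) ℝ) : Matrix (Fin d) (Fin d) ℝ :=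
  if h : M.PosSemidef then
    (h.1.eigenvectorUnitary : Matrix (Fin d) (Fin d) ℝ) *
      diagonal ((↑) ∘ (√·) ∘ h.1.eigenvalues) *
      (star h.1.eigenvectorUnitary : Matrix (Fin d) (Fin d) ℝ)
  else 0

/-- The largest eigenvalue `λ₁` of a symmetric matrix, via the Rayleigh
variational characterization. -/
def lamMax {d : ℕ} (M : Matrix (Fin d) (Fin d) ℝ) : ℝ :=
  sSup {r | ∃ x : Fin d → ℝ, x ⬝ᵥ x = 1 ∧ r = x ⬝ᵥ M.mulVec x}

/-- The smallest eigenvalue `λ_d` of a symmetric matrix, via the Rayleigh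
variational characterization. -/
def lamMin {d : ℕ} (M : Matrix (Fin d) (Fin d) ℝ) : ℝ :=
  sInf {r | ∃ x : Fin d → ℝ, x ⬝ᵥ x = 1 ∧ r = x ⬝ᵥ M.mulVec x}

namespace Statement5Aux

variable {d : ℕ}

/-- The Rayleigh set. -/
def RS (M : Matrix (Fin d) (Fin d) ℝ) : Set ℝ :=
  {r | ∃ x : Fin d → ℝ, x ⬝ᵥ x = 1 ∧ r = x ⬝ᵥ M.mulVec x}

lemma lamMax_eq (M : Matrix (Fin d) (Fin d) ℝ) : lamMax M = sSup (RS M) := rfl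
lemma lamMin_eq (M : Matrix (Fin d) (Fin d) ℝ) : lamMin M = sInf (RS M) := rfl

lemma psd_apply {M : Matrix (Fin d) (Fin d) ℝ} (hM : M.PosSemidef) (x : Fin d → ℝ) :
    0 ≤ x ⬝ᵥ M *ᵥ x := by simpa using hM.dotProduct_mulVec_nonneg x

lemma psd_of {M : Matrix (Fin d) (Fin d) ℝ} (hH : M.IsHermitian)
    (h : ∀ x : Fin d → ℝ, 0 ≤ x ⬝ᵥ M *ᵥ x) : M.PosSemidef :=
  .of_dotProduct_mulVec_nonneg hH fun x => by simpa using h x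

lemma msqrt_psd {M : Matrix (Fin d) (Fin d) ℝ} (hM : M.PosSemidef) : (msqrt M).PosSemidef := by
  rw [msqrt, dif_pos hM, star_eq_conjTranspose]
  apply PosSemidef.mul_mul_conjTranspose_same
  rw [posSemidef_diagonal_iff]
  intro i
  simp [Real.sqrt_nonneg]

lemma msqrt_mul_self {M : Matrix (Fin d) (Fin d) ℝ} (hM : M.PosSemidef) :
    msqrt M * msqrt M = M := by
  rw [msqrt, dif_pos hM]
  conv_rhs => rw [hM.1.spectral_theorem, Unitary.conjStarAlgAut_apply]
  have hU : star (hM.1.eigenvectorUnitary : Matrix (Fin d) (Fin d) ℝ) *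
      (hM.1.eigenvectorUnitary : Matrix (Fin d) (Fin d) ℝ) = 1 := Unitary.coe_star_mul_self _
  rw [show ∀ X Y Z : Matrix (Fin d) (Fin d) ℝ, X * Y * Z * (X * Y * Z) = X * Y * (Z * X) * Y * Z
    by intros; simp only [Matrix.mul_assoc], hU, Matrix.mul_one,
    Matrix.mul_assoc (hM.1.eigenvectorUnitary : Matrix (Fin d) (Fin d) ℝ), diagonal_mul_diagonal]
  congr 2
  congr 1
  funext i
  simp [Real.mul_self_sqrt (hM.eigenvalues_nonneg i)]

lemma rayleigh_abs_le (M : Matrix (Fin d) (Fin d) ℝ) (x : Fin d → ℝ) (hx : x ⬝ᵥ x = 1) :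
    |x ⬝ᵥ M *ᵥ x| ≤ ∑ i, ∑ j, |M i j| := by
  have hxi : ∀ i, |x i| ≤ 1 := by
    intro i
    rw [abs_le_one_iff_mul_self_le_one]
    calc x i * x i ≤ ∑ j, x j * x j :=
          Finset.single_le_sum (f := fun j => x j * x j)
            (fun j _ => mul_self_nonneg _) (Finset.mem_univ i)
      _ = 1 := hx
  have h1 : x ⬝ᵥ M *ᵥ x = ∑ i, ∑ j, x i * (M i j * x j) := by
    simp [dotProduct, mulVec, Finset.mul_sum]
  rw [h1]
  calc |∑ i, ∑ j, x i * (M i j * x j)| ≤ ∑ i, |∑ j, x i * (M i j * x j)| :=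
        Finset.abs_sum_le_sum_abs _ _
    _ ≤ ∑ i, ∑ j, |x i * (M i j * x j)| :=
        Finset.sum_le_sum fun i _ => Finset.abs_sum_le_sum_abs _ _
    _ ≤ ∑ i, ∑ j, |M i j| := by
        refine Finset.sum_le_sum fun i _ => Finset.sum_le_sum fun j _ => ?_
        rw [abs_mul, abs_mul]
        calc |x i| * (|M i j| * |x j|) ≤ 1 * (|M i j| * 1) := by
              apply mul_le_mul (hxi i) ?_ (by positivity) zero_le_one
              exact mul_le_mul_of_nonneg_left (hxi j) (abs_nonneg _)
          _ = |M i j| := by ring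

lemma bddAbove_RS (M : Matrix (Fin d) (Fin d) ℝ) : BddAbove (RS M) := by
  refine ⟨∑ i, ∑ j, |M i j|, fun r hr => ?_⟩
  obtain ⟨x, hx, rfl⟩ := hr
  exact (abs_le.mp (rayleigh_abs_le M x hx)).2

lemma bddBelow_RS (M : Matrix (Fin d) (Fin d) ℝ) : BddBelow (RS M) := by
  refine ⟨-(∑ i, ∑ j, |M i j|), fun r hr => ?_⟩
  obtain ⟨x, hx, rfl⟩ := hr
  exact (abs_le.mp (rayleigh_abs_le M x hx)).1

lemma nonempty_RS (hd : 1 ≤ d) (M : Matrix (Fin d) (Fin d) ℝ) : (RS M).Nonempty := by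
  have h : (Pi.single (⟨0, hd⟩ : Fin d) (1 : ℝ)) ⬝ᵥ (Pi.single (⟨0, hd⟩ : Fin d) (1 : ℝ)) = 1 := by
    simp [dotProduct, Pi.single_apply]
  exact ⟨_, _, h, rfl⟩

lemma psd_smul {M : Matrix (Fin d) (Fin d) ℝ} (hM : M.PosSemidef) {a : ℝ} (ha : 0 ≤ a) :
    (a • M).PosSemidef := by
  refine psd_of ?_ fun x => ?_
  · rw [Matrix.IsHermitian, Matrix.conjTranspose_smul, hM.1]; simp
  · rw [Matrix.smul_mulVec, dotProduct_smul, smul_eq_mul]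
    exact mul_nonneg ha (psd_apply hM x)

lemma dot_self_nonneg (x : Fin d → ℝ) : 0 ≤ x ⬝ᵥ x :=
  Finset.sum_nonneg fun i _ => mul_self_nonneg _

lemma rayleigh_le_lamMax (M : Matrix (Fin d) (Fin d) ℝ) (x : Fin d → ℝ) :
    x ⬝ᵥ M *ᵥ x ≤ lamMax M * (x ⬝ᵥ x) := by
  rcases eq_or_ne (x ⬝ᵥ x) 0 with h0 | h0
  · have hx0 : x = 0 := dotProduct_self_eq_zero.mp h0
    simp [hx0]
  · have hpos : 0 < x ⬝ᵥ x := lt_of_le_of_ne (dot_self_nonneg x) (Ne.symm h0)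
    set c : ℝ := Real.sqrt (x ⬝ᵥ x) with hc
    have hc0 : 0 < c := Real.sqrt_pos.mpr hpos
    have hc2 : c * c = x ⬝ᵥ x := Real.mul_self_sqrt (le_of_lt hpos)
    set u : Fin d → ℝ := c⁻¹ • x with hu
    have hu1 : u ⬝ᵥ u = 1 := by
      rw [hu, smul_dotProduct, dotProduct_smul, smul_eq_mul, smul_eq_mul, ← hc2]
      field_simp
    have hmem : u ⬝ᵥ M *ᵥ u ∈ RS M := ⟨u, hu1, rfl⟩
    have hle : u ⬝ᵥ M *ᵥ u ≤ lamMax M := le_csSup (bddAbove_RS M) hmem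
    have huM : u ⬝ᵥ M *ᵥ u = c⁻¹ * c⁻¹ * (x ⬝ᵥ M *ᵥ x) := by
      rw [hu, smul_dotProduct, mulVec_smul, dotProduct_smul, smul_eq_mul, smul_eq_mul]
      ring
    rw [huM] at hle
    have := mul_le_mul_of_nonneg_left hle (le_of_lt (mul_pos hc0 hc0))
    calc x ⬝ᵥ M *ᵥ x = (c * c) * (c⁻¹ * c⁻¹ * (x ⬝ᵥ M *ᵥ x)) := by field_simp
      _ ≤ (c * c) * lamMax M := this
      _ = lamMax M * (x ⬝ᵥ x) := by rw [hc2]; ring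

lemma lamMin_le_rayleigh (M : Matrix (Fin d) (Fin d) ℝ) (x : Fin d → ℝ) :
    lamMin M * (x ⬝ᵥ x) ≤ x ⬝ᵥ M *ᵥ x := by
  rcases eq_or_ne (x ⬝ᵥ x) 0 with h0 | h0
  · have hx0 : x = 0 := dotProduct_self_eq_zero.mp h0
    simp [hx0]
  · have hpos : 0 < x ⬝ᵥ x := lt_of_le_of_ne (dot_self_nonneg x) (Ne.symm h0)
    set c : ℝ := Real.sqrt (x ⬝ᵥ x) with hc
    have hc0 : 0 < c := Real.sqrt_pos.mpr hpos
    have hc2 : c * c = x ⬝ᵥ x := Real.mul_self_sqrt (le_of_lt hpos)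
    set u : Fin d → ℝ := c⁻¹ • x with hu
    have hu1 : u ⬝ᵥ u = 1 := by
      rw [hu, smul_dotProduct, dotProduct_smul, smul_eq_mul, smul_eq_mul, ← hc2]
      field_simp
    have hmem : u ⬝ᵥ M *ᵥ u ∈ RS M := ⟨u, hu1, rfl⟩
    have hle : lamMin M ≤ u ⬝ᵥ M *ᵥ u := csInf_le (bddBelow_RS M) hmem
    have huM : u ⬝ᵥ M *ᵥ u = c⁻¹ * c⁻¹ * (x ⬝ᵥ M *ᵥ x) := by
      rw [hu, smul_dotProduct, mulVec_smul, dotProduct_smul, smul_eq_mul, smul_eq_mul]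
      ring
    rw [huM] at hle
    have := mul_le_mul_of_nonneg_left hle (le_of_lt (mul_pos hc0 hc0))
    calc lamMin M * (x ⬝ᵥ x) = (c * c) * lamMin M := by rw [hc2]; ring
      _ ≤ (c * c) * (c⁻¹ * c⁻¹ * (x ⬝ᵥ M *ᵥ x)) := this
      _ = x ⬝ᵥ M *ᵥ x := by field_simp

lemma lamMax_nonneg (hd : 1 ≤ d) {M : Matrix (Fin d) (Fin d) ℝ} (hM : M.PosSemidef) :
    0 ≤ lamMax M := by
  obtain ⟨r, x, hx, rfl⟩ := nonempty_RS hd M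
  exact le_trans (psd_apply hM x) (le_csSup (bddAbove_RS M) ⟨x, hx, rfl⟩)

lemma lamMin_nonneg (hd : 1 ≤ d) {M : Matrix (Fin d) (Fin d) ℝ} (hM : M.PosSemidef) :
    0 ≤ lamMin M := by
  refine le_csInf (nonempty_RS hd M) fun r hr => ?_
  obtain ⟨x, hx, rfl⟩ := hr
  exact psd_apply hM x

/-- For `M` positive definite with `M ≤ c • 1`, `c⁻¹ • 1 ≤ M⁻¹`. -/
lemma inv_sub_smul_psd {M : Matrix (Fin d) (Fin d) ℝ} (hM : M.PosDef) {c : ℝ} (hc : 0 < c)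
    (h : (c • (1 : Matrix (Fin d) (Fin d) ℝ) - M).PosSemidef) :
    (M⁻¹ - c⁻¹ • (1 : Matrix (Fin d) (Fin d) ℝ)).PosSemidef := by
  set R := msqrt M with hR
  have hRH : Rᴴ = R := (msqrt_psd hM.posSemidef).isHermitian
  have hRR : R * R = M := msqrt_mul_self hM.posSemidef
  have hsand : (Rᴴ * (c • (1 : Matrix (Fin d) (Fin d) ℝ) - M) * R).PosSemidef :=
    h.conjTranspose_mul_mul_same R
  have hcalc : Rᴴ * (c • (1 : Matrix (Fin d) (Fin d) ℝ) - M) * R = c • M - M * M := by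
    rw [hRH, Matrix.mul_sub, Matrix.sub_mul, Matrix.mul_smul, Matrix.mul_one,
      Matrix.smul_mul, hRR, ← hRR]
    rw [show R * R * (R * R) = R * (R * R) * R by noncomm_ring]
  rw [hcalc] at hsand
  have hmid : (M - c⁻¹ • (M * M)).PosSemidef := by
    have : M - c⁻¹ • (M * M) = c⁻¹ • (c • M - M * M) := by
      rw [smul_sub, smul_smul, inv_mul_cancel₀ hc.ne', one_smul]
    rw [this]
    exact psd_smul hsand (by positivity)
  have hdet : IsUnit M.det := hM.det_pos.ne'.isUnit
  have hinv1 : M⁻¹ * M = 1 := Matrix.nonsing_inv_mul M hdet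
  have hinv2 : M * M⁻¹ = 1 := Matrix.mul_nonsing_inv M hdet
  have hfin : (M⁻¹)ᴴ * (M - c⁻¹ • (M * M)) * M⁻¹
      = M⁻¹ - c⁻¹ • (1 : Matrix (Fin d) (Fin d) ℝ) := by
    rw [hM.isHermitian.inv, Matrix.mul_sub, Matrix.sub_mul, Matrix.mul_smul, Matrix.smul_mul,
      hinv1, show M⁻¹ * (M * M) = M from by rw [← Matrix.mul_assoc, hinv1, Matrix.one_mul],
      hinv2, Matrix.one_mul]
  rw [← hfin]
  exact hmid.conjTranspose_mul_mul_same M⁻¹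

/-- For `M` positive definite with `b • 1 ≤ M` and `b > 0`, `M⁻¹ ≤ b⁻¹ • 1`. -/
lemma smul_sub_inv_psd {M : Matrix (Fin d) (Fin d) ℝ} (hM : M.PosDef) {b : ℝ} (hb : 0 < b)
    (h : (M - b • (1 : Matrix (Fin d) (Fin d) ℝ)).PosSemidef) :
    (b⁻¹ • (1 : Matrix (Fin d) (Fin d) ℝ) - M⁻¹).PosSemidef := by
  set R := msqrt M with hR
  have hRH : Rᴴ = R := (msqrt_psd hM.posSemidef).isHermitian
  have hRR : R * R = M := msqrt_mul_self hM.posSemidef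
  have hsand : (Rᴴ * (M - b • (1 : Matrix (Fin d) (Fin d) ℝ)) * R).PosSemidef :=
    h.conjTranspose_mul_mul_same R
  have hcalc : Rᴴ * (M - b • (1 : Matrix (Fin d) (Fin d) ℝ)) * R = M * M - b • M := by
    rw [hRH, Matrix.mul_sub, Matrix.sub_mul, Matrix.mul_smul, Matrix.mul_one,
      Matrix.smul_mul, hRR, ← hRR]
    rw [show R * (R * R) * R = R * R * (R * R) by noncomm_ring]
  rw [hcalc] at hsand
  have hmid : (b⁻¹ • (M * M) - M).PosSemidef := by
    have : b⁻¹ • (M * M) - M = b⁻¹ • (M * M - b • M) := by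
      rw [smul_sub, smul_smul, inv_mul_cancel₀ hb.ne', one_smul]
    rw [this]
    exact psd_smul hsand (by positivity)
  have hdet : IsUnit M.det := hM.det_pos.ne'.isUnit
  have hinv1 : M⁻¹ * M = 1 := Matrix.nonsing_inv_mul M hdet
  have hinv2 : M * M⁻¹ = 1 := Matrix.mul_nonsing_inv M hdet
  have hfin : (M⁻¹)ᴴ * (b⁻¹ • (M * M) - M) * M⁻¹
      = b⁻¹ • (1 : Matrix (Fin d) (Fin d) ℝ) - M⁻¹ := by
    rw [hM.isHermitian.inv, Matrix.mul_sub, Matrix.sub_mul, Matrix.mul_smul, Matrix.smul_mul,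
      show M⁻¹ * (M * M) = M from by rw [← Matrix.mul_assoc, hinv1, Matrix.one_mul],
      hinv1, hinv2, Matrix.one_mul]
  rw [← hfin]
  exact hmid.conjTranspose_mul_mul_same M⁻¹

end Statement5Aux

open Statement5Aux in
/-- With `S := Bᵀ R₀⁻¹ B` and `𝓕(P) := S (I + P S)⁻¹`, for every
positive semidefinite `P`: `𝓕(P) = S^{1/2} (I + S^{1/2} P S^{1/2})⁻¹ S^{1/2}` and,
in the Loewner order, `α₋(P)·S ≤ 𝓕(P) ≤ α₊(P)·S`, where
`α₋(P) = (1 + λ₁(P)λ₁(S))⁻¹` and `α₊(P) = (1 + λ_d(P)λ_d(S))⁻¹`. -/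
theorem statement5 {d d₀ : ℕ} (hd : 1 ≤ d) (hd₀ : 1 ≤ d₀)
    (B : Matrix (Fin d₀) (Fin d) ℝ) (R₀ : Matrix (Fin d₀) (Fin d₀) ℝ)
    (hR₀ : R₀.PosDef)
    (S : Matrix (Fin d) (Fin d) ℝ) (hSdef : S = Bᵀ * R₀⁻¹ * B)
    (F : Matrix (Fin d) (Fin d) ℝ → Matrix (Fin d) (Fin d) ℝ)
    (hF : ∀ P, F P = S * (1 + P * S)⁻¹)
    (P : Matrix (Fin d) (Fin d) ℝ) (hP : P.PosSemidef) :
    F P = msqrt S * (1 + msqrt S * P * msqrt S)⁻¹ * msqrt S ∧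
    (F P - (1 + lamMax P * lamMax S)⁻¹ • S).PosSemidef ∧
    ((1 + lamMin P * lamMin S)⁻¹ • S - F P).PosSemidef := by
  classical
  -- S is positive semidefinite
  have hBH : Bᴴ = Bᵀ := Matrix.conjTranspose_eq_transpose_of_trivial B
  have hS : S.PosSemidef := by
    rw [hSdef, ← hBH]
    exact hR₀.inv.posSemidef.conjTranspose_mul_mul_same B
  -- the square root Q of S
  set Q := msqrt S with hQdef
  have hQeq : Q = msqrt S := hQdef
  have hQpsd : Q.PosSemidef := by rw [hQeq]; exact msqrt_psd hS
  have hQH : Qᴴ = Q := hQpsd.isHermitian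
  have hQQ : Q * Q = S := by rw [hQeq]; exact msqrt_mul_self hS
  -- the middle matrix M
  set M : Matrix (Fin d) (Fin d) ℝ := 1 + Q * P * Q with hMdef
  have hQPQ : (Q * P * Q).PosSemidef := by
    have := hP.conjTranspose_mul_mul_same Q
    rwa [hQH] at this
  have hM : M.PosDef := Matrix.PosDef.one.add_posSemidef hQPQ
  have hMdet : IsUnit M.det := hM.det_pos.ne'.isUnit
  have hMinv1 : M⁻¹ * M = 1 := Matrix.nonsing_inv_mul M hMdet
  -- invertibility of 1 + P * S
  have hdet : IsUnit (1 + P * S).det := by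
    have h1 : (1 + P * S).det = M.det := by
      rw [hMdef, ← hQQ, show P * (Q * Q) = (P * Q) * Q from by rw [Matrix.mul_assoc],
        Matrix.det_one_add_mul_comm, ← Matrix.mul_assoc]
    rw [h1]
    exact hMdet
  -- part 1: the square-root identity
  have h2 : Q * (1 + P * S) = M * Q := by
    rw [hMdef, ← hQQ]
    noncomm_ring
  have key : Q * M⁻¹ * Q * (1 + P * S) = S := by
    calc Q * M⁻¹ * Q * (1 + P * S) = Q * M⁻¹ * (Q * (1 + P * S)) := by
          rw [Matrix.mul_assoc]
      _ = Q * M⁻¹ * (M * Q) := by rw [h2]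
      _ = Q * (M⁻¹ * M) * Q := by rw [Matrix.mul_assoc, Matrix.mul_assoc, Matrix.mul_assoc]
      _ = Q * Q := by rw [hMinv1, Matrix.mul_one]
      _ = S := hQQ
  have eq1 : F P = Q * M⁻¹ * Q := by
    have h3 : Q * M⁻¹ * Q * ((1 + P * S) * (1 + P * S)⁻¹) = S * (1 + P * S)⁻¹ := by
      rw [← Matrix.mul_assoc, key]
    rw [hF P, ← h3, Matrix.mul_nonsing_inv _ hdet, Matrix.mul_one]
  have part1 : F P = msqrt S * (1 + msqrt S * P * msqrt S)⁻¹ * msqrt S := eq1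
  -- Rayleigh bound for the sandwiched quadratic form
  have hQT : Qᵀ = Q := by
    rw [← Matrix.conjTranspose_eq_transpose_of_trivial, hQH]
  have hsym : ∀ x : Fin d → ℝ, x ⬝ᵥ (Q * P * Q) *ᵥ x = (Q *ᵥ x) ⬝ᵥ P *ᵥ (Q *ᵥ x) := by
    intro x
    conv_lhs => rw [← Matrix.mulVec_mulVec, ← Matrix.mulVec_mulVec,
      Matrix.dotProduct_mulVec, ← Matrix.mulVec_transpose, hQT]
  have hSvec : ∀ x : Fin d → ℝ, (Q *ᵥ x) ⬝ᵥ (Q *ᵥ x) = x ⬝ᵥ S *ᵥ x := by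
    intro x
    conv_rhs => rw [← hQQ, ← Matrix.mulVec_mulVec,
      Matrix.dotProduct_mulVec, ← Matrix.mulVec_transpose, hQT]
  -- scalar bounds
  have hlamMaxP : 0 ≤ lamMax P := lamMax_nonneg hd hP
  have hlamMaxS : 0 ≤ lamMax S := lamMax_nonneg hd hS
  have hlamMinP : 0 ≤ lamMin P := lamMin_nonneg hd hP
  have hlamMinS : 0 ≤ lamMin S := lamMin_nonneg hd hS
  set c : ℝ := 1 + lamMax P * lamMax S with hcdef
  set b : ℝ := 1 + lamMin P * lamMin S with hbdef
  have hc : 0 < c := by positivity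
  have hb : 0 < b := by positivity
  -- M ≤ c • 1
  have hherm1 : (c • (1 : Matrix (Fin d) (Fin d) ℝ) - M).IsHermitian := by
    apply Matrix.IsHermitian.sub ?_ hM.isHermitian
    rw [Matrix.IsHermitian, Matrix.conjTranspose_smul, Matrix.conjTranspose_one]
    simp
  have hcM : (c • (1 : Matrix (Fin d) (Fin d) ℝ) - M).PosSemidef := by
    refine psd_of hherm1 fun x => ?_
    have hexp : x ⬝ᵥ (c • (1 : Matrix (Fin d) (Fin d) ℝ) - M) *ᵥ x
        = (lamMax P * lamMax S) * (x ⬝ᵥ x) - x ⬝ᵥ (Q * P * Q) *ᵥ x := by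
      rw [Matrix.sub_mulVec, dotProduct_sub, Matrix.smul_mulVec, dotProduct_smul,
        Matrix.one_mulVec, hMdef, Matrix.add_mulVec, dotProduct_add, Matrix.one_mulVec]
      simp [hcdef, smul_eq_mul]
      ring
    rw [hexp, sub_nonneg, hsym x]
    calc (Q *ᵥ x) ⬝ᵥ P *ᵥ (Q *ᵥ x) ≤ lamMax P * ((Q *ᵥ x) ⬝ᵥ (Q *ᵥ x)) :=
          rayleigh_le_lamMax P _
      _ = lamMax P * (x ⬝ᵥ S *ᵥ x) := by rw [hSvec x]
      _ ≤ lamMax P * (lamMax S * (x ⬝ᵥ x)) :=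
          mul_le_mul_of_nonneg_left (rayleigh_le_lamMax S x) hlamMaxP
      _ = (lamMax P * lamMax S) * (x ⬝ᵥ x) := by ring
  -- b • 1 ≤ M
  have hherm2 : (M - b • (1 : Matrix (Fin d) (Fin d) ℝ)).IsHermitian := by
    apply Matrix.IsHermitian.sub hM.isHermitian
    rw [Matrix.IsHermitian, Matrix.conjTranspose_smul, Matrix.conjTranspose_one]
    simp
  have hbM : (M - b • (1 : Matrix (Fin d) (Fin d) ℝ)).PosSemidef := by
    refine psd_of hherm2 fun x => ?_
    have hexp : x ⬝ᵥ (M - b • (1 : Matrix (Fin d) (Fin d) ℝ)) *ᵥ x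
        = x ⬝ᵥ (Q * P * Q) *ᵥ x - (lamMin P * lamMin S) * (x ⬝ᵥ x) := by
      rw [Matrix.sub_mulVec, dotProduct_sub, Matrix.smul_mulVec, dotProduct_smul,
        Matrix.one_mulVec, hMdef, Matrix.add_mulVec, dotProduct_add, Matrix.one_mulVec]
      simp [hbdef, smul_eq_mul]
      ring
    rw [hexp, sub_nonneg, hsym x]
    calc (lamMin P * lamMin S) * (x ⬝ᵥ x) = lamMin P * (lamMin S * (x ⬝ᵥ x)) := by ring
      _ ≤ lamMin P * (x ⬝ᵥ S *ᵥ x) :=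
          mul_le_mul_of_nonneg_left (lamMin_le_rayleigh S x) hlamMinP
      _ = lamMin P * ((Q *ᵥ x) ⬝ᵥ (Q *ᵥ x)) := by rw [hSvec x]
      _ ≤ (Q *ᵥ x) ⬝ᵥ P *ᵥ (Q *ᵥ x) := lamMin_le_rayleigh P _
  -- inverse bounds
  have hinvlow : (M⁻¹ - c⁻¹ • (1 : Matrix (Fin d) (Fin d) ℝ)).PosSemidef :=
    inv_sub_smul_psd hM hc hcM
  have hinvhigh : (b⁻¹ • (1 : Matrix (Fin d) (Fin d) ℝ) - M⁻¹).PosSemidef :=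
    smul_sub_inv_psd hM hb hbM
  -- sandwich by Q
  have hsand1 : (Qᴴ * (M⁻¹ - c⁻¹ • (1 : Matrix (Fin d) (Fin d) ℝ)) * Q).PosSemidef :=
    hinvlow.conjTranspose_mul_mul_same Q
  have hsand2 : (Qᴴ * (b⁻¹ • (1 : Matrix (Fin d) (Fin d) ℝ) - M⁻¹) * Q).PosSemidef :=
    hinvhigh.conjTranspose_mul_mul_same Q
  have heq1 : Qᴴ * (M⁻¹ - c⁻¹ • (1 : Matrix (Fin d) (Fin d) ℝ)) * Q = F P - c⁻¹ • S := by
    rw [hQH, Matrix.mul_sub, Matrix.sub_mul, Matrix.mul_smul, Matrix.mul_one,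
      Matrix.smul_mul, hQQ, eq1]
  have heq2 : Qᴴ * (b⁻¹ • (1 : Matrix (Fin d) (Fin d) ℝ) - M⁻¹) * Q = b⁻¹ • S - F P := by
    rw [hQH, Matrix.mul_sub, Matrix.sub_mul, Matrix.mul_smul, Matrix.mul_one,
      Matrix.smul_mul, hQQ, eq1]
  rw [heq1] at hsand1
  rw [heq2] at hsand2
  exact ⟨part1, hsand1, hsand2⟩
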